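/- Let E be a real vector space and let T : E → E be a linear map such that the range of id_E − T is finite-dimensional. Then: (i) every subspace W of E containing range(id_E − T) is invariant under T (i.e. T(W) ⊆ W); and (ii) if W₁ and W₂ are finite-dimensional subspaces of E both containing range(id_E − T), then the determinant of the restriction of T to W₁ (as an endomorphism of W₁) equals the determinant of the restriction of T to W₂. -/

import Mathlib

open LinearMap Submodule

/-- If `f : V → V` preserves `p` and `f - id` maps into `p`, then `det f = det (f|_p)`. -/
lemma det_eq_det_restrict_aux {V : Type*} [AddCommGroup V] [Module ℝ V]
    [FiniteDimensional ℝ V] (f : V →ₗ[ℝ] V) (p : Submodule ℝ V)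
    (hp : ∀ x ∈ p, f x ∈ p) (hf : ∀ x : V, f x - x ∈ p) :
    LinearMap.det f = LinearMap.det (f.restrict hp) := by
  obtain ⟨q, hq⟩ := Submodule.exists_isCompl p
  let bp := Module.finBasis ℝ p
  let bq := Module.finBasis ℝ q
  let e := Submodule.prodEquivOfIsCompl p q hq
  let b := (bp.prod bq).map e
  have hrepr : ∀ x : V, ∀ k, b.repr x k = (bp.prod bq).repr (e.symm x) k := by
    intro x k
    simp [b, Module.Basis.map_repr]
  have hb_inl : ∀ i, b (Sum.inl i) = (bp i : V) := by
    intro i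
    simp [b, e, Module.Basis.prod_apply, Submodule.coe_prodEquivOfIsCompl']
  have hb_inr : ∀ i, b (Sum.inr i) = (bq i : V) := by
    intro i
    simp [b, e, Module.Basis.prod_apply, Submodule.coe_prodEquivOfIsCompl']
  rw [← LinearMap.det_toMatrix b, ← LinearMap.det_toMatrix bp]
  have hmat : LinearMap.toMatrix b b f =
      Matrix.fromBlocks (LinearMap.toMatrix bp bp (f.restrict hp))
        (Matrix.of fun i j => b.repr (f (b (Sum.inr j))) (Sum.inl i)) 0 1 := by
    ext i j
    rcases j with j | j
    · rcases i with i | i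
      · -- top-left block
        have hmem : f (b (Sum.inl j)) ∈ p := by
          rw [hb_inl]; exact hp _ (bp j).2
        have hsymm : e.symm (f (b (Sum.inl j))) = (⟨f (b (Sum.inl j)), hmem⟩, 0) := by
          exact Submodule.prodEquivOfIsCompl_symm_apply_left p q hq ⟨_, hmem⟩
        rw [Matrix.fromBlocks_apply₁₁, LinearMap.toMatrix_apply, LinearMap.toMatrix_apply,
          hrepr, hsymm, Module.Basis.prod_repr_inl]
        congr 1
        rw [LinearMap.restrict_apply]
        congr 1
        ext
        simp [hb_inl]
      · -- bottom-left block is 0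
        have hmem : f (b (Sum.inl j)) ∈ p := by
          rw [hb_inl]; exact hp _ (bp j).2
        rw [Matrix.fromBlocks_apply₂₁, LinearMap.toMatrix_apply, hrepr, Module.Basis.prod_repr_inr,
          (Submodule.prodEquivOfIsCompl_symm_apply_snd_eq_zero p q hq).2 hmem]
        simp
    · rcases i with i | i
      · rw [Matrix.fromBlocks_apply₁₂, LinearMap.toMatrix_apply, Matrix.of_apply]
      · -- bottom-right block is 1
        have hx : f (b (Sum.inr j)) = b (Sum.inr j) + (f (b (Sum.inr j)) - b (Sum.inr j)) := by
          abel
        have hmem : f (b (Sum.inr j)) - b (Sum.inr j) ∈ p := hf _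
        rw [Matrix.fromBlocks_apply₂₂, LinearMap.toMatrix_apply, hx, map_add]
        have h1 : b.repr (b (Sum.inr j)) (Sum.inr i) = if i = j then 1 else 0 := by
          rw [Module.Basis.repr_self, Finsupp.single_apply]
          simp [Sum.inr.injEq, eq_comm]
        have h2 : b.repr (f (b (Sum.inr j)) - b (Sum.inr j)) (Sum.inr i) = 0 := by
          rw [hrepr, Module.Basis.prod_repr_inr,
            (Submodule.prodEquivOfIsCompl_symm_apply_snd_eq_zero p q hq).2 hmem]
          simp
        simp only [Finsupp.add_apply, h1, h2, add_zero]
        rw [Matrix.one_apply]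
  rw [hmat, Matrix.det_fromBlocks_zero₂₁, Matrix.det_one, mul_one]

/-- Let `T : E → E` be linear with `range (id − T)` finite-dimensional. Then (i) every subspace
`W` containing `range (id − T)` is `T`-invariant; and (ii) the determinants of the restrictions
of `T` to any two finite-dimensional subspaces containing `range (id − T)` coincide. -/
theorem admissible_det_well_defined
    {E : Type*} [AddCommGroup E] [Module ℝ E] (T : E →ₗ[ℝ] E)
    (hT : FiniteDimensional ℝ (LinearMap.range (LinearMap.id - T))) :
    (∀ W : Submodule ℝ E, LinearMap.range (LinearMap.id - T) ≤ W → ∀ x ∈ W, T x ∈ W) ∧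
    (∀ W₁ W₂ : Submodule ℝ E, FiniteDimensional ℝ W₁ → FiniteDimensional ℝ W₂ →
      LinearMap.range (LinearMap.id - T) ≤ W₁ → LinearMap.range (LinearMap.id - T) ≤ W₂ →
      ∀ (h₁ : ∀ x ∈ W₁, T x ∈ W₁) (h₂ : ∀ x ∈ W₂, T x ∈ W₂),
        LinearMap.det (T.restrict h₁) = LinearMap.det (T.restrict h₂)) := by
  set R := LinearMap.range (LinearMap.id - T) with hRdef
  have hInv : ∀ W : Submodule ℝ E, R ≤ W → ∀ x ∈ W, T x ∈ W := by
    intro W hW x hx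
    have h1 : x - T x ∈ W := hW ⟨x, rfl⟩
    have : T x = x - (x - T x) := by abel
    rw [this]
    exact W.sub_mem hx h1
  refine ⟨hInv, ?_⟩
  have hRinv : ∀ x ∈ R, T x ∈ R := hInv R le_rfl
  -- key: for any findim W containing R, det (T|W) = det (T|R)
  have key : ∀ (W : Submodule ℝ E), FiniteDimensional ℝ W → R ≤ W →
      ∀ (h : ∀ x ∈ W, T x ∈ W),
      LinearMap.det (T.restrict h) = LinearMap.det (T.restrict hRinv) := by
    intro W _ hRW h
    set p : Submodule ℝ W := R.comap W.subtype with hpdef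
    have hp : ∀ x ∈ p, (T.restrict h) x ∈ p := by
      intro x hx
      simp only [hpdef, Submodule.mem_comap] at hx ⊢
      exact hRinv _ hx
    have hfp : ∀ x : W, (T.restrict h) x - x ∈ p := by
      intro x
      simp only [hpdef, Submodule.mem_comap]
      have heq : (((T.restrict h) x - x : W) : E) = T (x : E) - (x : E) := by
        simp [LinearMap.restrict_apply]
      show (((T.restrict h) x - x : W) : E) ∈ R
      rw [heq]
      have hmem : (x : E) - T (x : E) ∈ R := ⟨x, by simp⟩
      have : T (x : E) - (x : E) = -((x : E) - T (x : E)) := by abel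
      rw [this]
      exact R.neg_mem hmem
    rw [det_eq_det_restrict_aux (T.restrict h) p hp hfp]
    -- now relate restriction to p with restriction to R via the canonical equiv
    let eq1 : p ≃ₗ[ℝ] R := Submodule.comapSubtypeEquivOfLe hRW
    have hconj : T.restrict hRinv = eq1.conj ((T.restrict h).restrict hp) := by
      ext x
      have : ((T.restrict hRinv) x : E) = T x := rfl
      rw [this]
      simp only [LinearEquiv.conj_apply, LinearMap.coe_comp, Function.comp_apply,
        LinearEquiv.coe_coe]
      have hsymm : ((eq1.symm x : W) : E) = (x : E) := by
        simp [eq1, Submodule.comapSubtypeEquivOfLe]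
      have h2 : ∀ y : p, ((eq1 y : R) : E) = ((y : W) : E) := by
        intro y
        simp [eq1, Submodule.comapSubtypeEquivOfLe]
      rw [h2]
      simp [LinearMap.restrict_apply, hsymm]
    rw [hconj, LinearEquiv.conj_apply, LinearMap.comp_assoc, LinearMap.det_conj]
  intro W₁ W₂ hfd₁ hfd₂ hR₁ hR₂ h₁ h₂
  rw [key W₁ hfd₁ hR₁ h₁, key W₂ hfd₂ hR₂ h₂]
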